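/- A max register object is not doubly-perturbing: no operation of the max register (neither read nor writeMax(v) for any v) witnesses that it is doubly-perturbing. -/
import Mathlib


/-- Operations of a max register: `writeMax v` and `read`. -/
inductive MROp : Type
  | writeMax (v : ℕ)
  | read

def mrStep : MROp → ℕ → ℕ
  | .writeMax v, s => max s v
  | .read, s => s

def mrResp : MROp → ℕ → Option ℕ
  | .writeMax _, _ => none
  | .read, s => some s

/-- State of the max register after a sequential history (initially 0). -/
def mrRun (H : List MROp) : ℕ :=
  H.foldl (fun s op => mrStep op s) 0

/-- `opp` is perturbing with respect to `opq` after history `H`. -/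
def mrPerturbing (opp opq : MROp) (H : List MROp) : Prop :=
  mrResp opq (mrRun (H ++ [opp])) ≠ mrResp opq (mrRun H)

lemma mrRun_append (H L : List MROp) :
    mrRun (H ++ L) = L.foldl (fun s op => mrStep op s) (mrRun H) := by
  simp [mrRun, List.foldl_append]

lemma mrRun_snoc (H : List MROp) (op : MROp) :
    mrRun (H ++ [op]) = mrStep op (mrRun H) := by
  simp [mrRun_append]

lemma foldl_mono (L : List MROp) (s : ℕ) :
    s ≤ L.foldl (fun s op => mrStep op s) s := by
  induction L generalizing s with
  | nil => simp
  | cons a t ih =>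
    simp only [List.foldl_cons]
    refine le_trans ?_ (ih (mrStep a s))
    cases a <;> simp [mrStep]

lemma mrRun_prefix_le (H L : List MROp) : mrRun H ≤ mrRun (H ++ L) := by
  rw [mrRun_append]; exact foldl_mono L _

/-- A max register is not doubly-perturbing: no operation `op` admits a
history `H₁` and operation `opq` such that `op` is perturbing w.r.t. `opq`
after `H₁`, and `op` is again perturbing (w.r.t. some operation) after some
extension of `H₁ ∘ op ∘ opq`. -/
theorem stmt7 :
    ¬ ∃ (op : MROp) (H₁ : List MROp) (opq : MROp),
        mrPerturbing op opq H₁ ∧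
        ∃ (E : List MROp) (opq' : MROp),
          mrPerturbing op opq' (H₁ ++ [op, opq] ++ E) := by
  rintro ⟨op, H₁, opq, h1, E, opq', h2⟩
  cases op with
  | read =>
    apply h1
    rw [mrRun_snoc]
    rfl
  | writeMax v =>
    apply h2
    rw [mrRun_snoc]
    have hv : v ≤ mrRun (H₁ ++ [MROp.writeMax v, opq] ++ E) := by
      calc v ≤ mrRun (H₁ ++ [MROp.writeMax v]) := by
            rw [mrRun_snoc]; exact le_max_right _ _
        _ ≤ mrRun ((H₁ ++ [MROp.writeMax v]) ++ ([opq] ++ E)) := mrRun_prefix_le _ _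
        _ = mrRun (H₁ ++ [MROp.writeMax v, opq] ++ E) := by
            congr 1; simp
    show mrResp opq' (mrStep (MROp.writeMax v) _) = _
    have hv' : max (mrRun (H₁ ++ [MROp.writeMax v, opq] ++ E)) v
        = mrRun (H₁ ++ [MROp.writeMax v, opq] ++ E) := max_eq_left hv
    simpa [mrStep] using congrArg (mrResp opq') hv'
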